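/- Upper bound for the Riccati-type value function: for 𝒪 ⊂ ℝⁿ nonempty compact, 𝔠>0, λ>0, let p = (−λ+√(λ²+4𝔠))/2 be the positive root of p²+λp−𝔠=0. If x ∈ ℝⁿ, z ∈ 𝒪 realizes dist(x,𝒪), and we use the control α(t) = −p(x−z)e^{−pt}, the resulting trajectory y(t) = z + (x−z)e^{−pt} yields cost ∫₀^∞ (½|α(t)|² + (𝔠/2)dist(y(t),𝒪)²) e^{−λt} dt ≤ (p/2) dist(x,𝒪)². Hence R_𝔠(x,𝒪) ≤ (p/2) dist(x,𝒪)². -/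

import Mathlib

open MeasureTheory Set Metric

private theorem my_int_exp {b : ℝ} (hb : 0 < b) :
    (∫ t in Ioi (0:ℝ), Real.exp (-b * t)) = 1 / b := by
  have h := integral_Ioi_of_hasDerivAt_of_tendsto' (a := (0:ℝ))
    (f := fun t => -Real.exp (-b * t) / b) (f' := fun t => Real.exp (-b * t))
    (m := 0) ?_ (exp_neg_integrableOn_Ioi 0 hb) ?_
  · rw [h]; simp; ring
  · intro t ht
    have h1 : HasDerivAt (fun t : ℝ => -b * t) (-b) t := by
      simpa using (hasDerivAt_id t).const_mul (-b)
    have : HasDerivAt (fun t : ℝ => Real.exp (-b * t)) (Real.exp (-b * t) * (-b)) t :=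
      (Real.hasDerivAt_exp _).comp t h1
    have := (this.neg).div_const b
    convert this using 1
    · rfl
    · rfl
    · field_simp
  · have : Filter.Tendsto (fun t : ℝ => Real.exp (-b * t)) Filter.atTop (nhds 0) := by
      simpa using Real.tendsto_exp_comp_nhds_zero.mpr
        (Filter.Tendsto.const_mul_atTop_of_neg (neg_neg_iff_pos.mpr hb) Filter.tendsto_id)
    have := (this.neg).div_const b
    simpa using this

/-- Admissible control-trajectory pair. -/
def Admissible {n : ℕ} (x : EuclideanSpace ℝ (Fin n))
    (α y : ℝ → EuclideanSpace ℝ (Fin n)) : Prop :=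
  Measurable α ∧ y 0 = x ∧ ∀ t, 0 ≤ t → HasDerivAt y (α t) t

/-- Riccati-type value function with running cost `½|α|² + (𝔠/2) dist(y,𝒪)²`. -/
noncomputable def riccatiValue {n : ℕ} (lam c : ℝ) (O : Set (EuclideanSpace ℝ (Fin n)))
    (x : EuclideanSpace ℝ (Fin n)) : ℝ :=
  sInf {r | ∃ α y, Admissible x α y ∧
    r = ∫ s in Ioi (0 : ℝ),
          ((1 / 2) * ‖α s‖ ^ 2 + (c / 2) * (infDist (y s) O) ^ 2) * Real.exp (-lam * s)}

/-- upper bound via the explicit control `α(t) = −p(x−z)e^{−pt}`,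
trajectory `y(t) = z + (x−z)e^{−pt}`, where `p = (−λ+√(λ²+4𝔠))/2` and `z ∈ 𝒪`
realizes `dist(x,𝒪)`: the cost is at most `(p/2) dist(x,𝒪)²`, whence
`R_𝔠(x,𝒪) ≤ (p/2) dist(x,𝒪)²`. -/
theorem stmt11 {n : ℕ} (O : Set (EuclideanSpace ℝ (Fin n)))
    (hO : O.Nonempty) (hOc : IsCompact O)
    (c lam p : ℝ) (hc : 0 < c) (hlam : 0 < lam)
    (hp : p = (-lam + Real.sqrt (lam ^ 2 + 4 * c)) / 2)
    (x z : EuclideanSpace ℝ (Fin n)) (hz : z ∈ O) (hzd : ‖x - z‖ = infDist x O)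
    (α y : ℝ → EuclideanSpace ℝ (Fin n))
    (hα : ∀ t, α t = (-(p * Real.exp (-p * t))) • (x - z))
    (hy : ∀ t, y t = z + Real.exp (-p * t) • (x - z)) :
    (∫ t in Ioi (0 : ℝ),
        ((1 / 2) * ‖α t‖ ^ 2 + (c / 2) * (infDist (y t) O) ^ 2) * Real.exp (-lam * t))
      ≤ (p / 2) * (infDist x O) ^ 2 ∧
    riccatiValue lam c O x ≤ (p / 2) * (infDist x O) ^ 2 := by
  set d := infDist x O with hd
  have hd0 : 0 ≤ d := infDist_nonneg
  have hs : Real.sqrt (lam ^ 2 + 4 * c) ^ 2 = lam ^ 2 + 4 * c :=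
    Real.sq_sqrt (by positivity)
  have hppos : 0 < p := by
    have h1 : lam < Real.sqrt (lam ^ 2 + 4 * c) := by
      nlinarith [Real.sqrt_nonneg (lam ^ 2 + 4 * c)]
    rw [hp]; linarith
  have hpeq : p ^ 2 + lam * p = c := by
    rw [hp]; linear_combination (1/4) * hs
  have hb : 0 < lam + 2 * p := by linarith
  -- pointwise bound
  have key : ∀ t : ℝ, ((1 / 2) * ‖α t‖ ^ 2 + (c / 2) * (infDist (y t) O) ^ 2)
      * Real.exp (-lam * t)
      ≤ ((p ^ 2 + c) / 2 * d ^ 2) * Real.exp (-(lam + 2 * p) * t) := by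
    intro t
    have he : (0:ℝ) < Real.exp (-p * t) := Real.exp_pos _
    have hE : (0:ℝ) ≤ Real.exp (-lam * t) := (Real.exp_pos _).le
    have hnα : ‖α t‖ = p * Real.exp (-p * t) * d := by
      rw [hα, norm_smul, hzd, Real.norm_eq_abs, abs_of_neg (by nlinarith : -(p * Real.exp (-p * t)) < 0)]
      ring
    have hid : infDist (y t) O ≤ Real.exp (-p * t) * d := by
      calc infDist (y t) O ≤ dist (y t) z := infDist_le_dist_of_mem hz
        _ = ‖Real.exp (-p * t) • (x - z)‖ := by
            rw [hy, dist_eq_norm]; congr 1; abel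
        _ = Real.exp (-p * t) * d := by
            rw [norm_smul, hzd, Real.norm_eq_abs, abs_of_pos he]
    have hid0 : (0:ℝ) ≤ infDist (y t) O := infDist_nonneg
    have hsq : (infDist (y t) O) ^ 2 ≤ (Real.exp (-p * t) * d) ^ 2 :=
      pow_le_pow_left₀ hid0 hid 2
    have hexp : Real.exp (-(lam + 2 * p) * t)
        = Real.exp (-lam * t) * Real.exp (-p * t) ^ 2 := by
      rw [sq, ← Real.exp_add, ← Real.exp_add]; ring_nf
    rw [hnα, hexp]
    nlinarith [mul_le_mul_of_nonneg_right
      (mul_le_mul_of_nonneg_left hsq (le_of_lt (half_pos hc))) hE]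
  -- continuity of the integrand
  have hαc : Continuous α := by
    have : α = fun t => (-(p * Real.exp (-p * t))) • (x - z) := funext hα
    rw [this]; fun_prop
  have hyc : Continuous y := by
    have : y = fun t => z + Real.exp (-p * t) • (x - z) := funext hy
    rw [this]; fun_prop
  have hfc : Continuous fun t : ℝ =>
      ((1 / 2) * ‖α t‖ ^ 2 + (c / 2) * (infDist (y t) O) ^ 2) * Real.exp (-lam * t) := by
    apply Continuous.mul
    · exact ((continuous_const.mul ((hαc.norm).pow 2)).add
        (continuous_const.mul (((continuous_infDist_pt O).comp hyc).pow 2)))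
    · fun_prop
  have hfnn : ∀ t : ℝ, 0 ≤ ((1 / 2) * ‖α t‖ ^ 2 + (c / 2) * (infDist (y t) O) ^ 2)
      * Real.exp (-lam * t) := by
    intro t
    have := infDist_nonneg (x := y t) (s := O)
    positivity
  -- integrability
  have hg : IntegrableOn (fun t : ℝ => ((p ^ 2 + c) / 2 * d ^ 2)
      * Real.exp (-(lam + 2 * p) * t)) (Ioi 0) :=
    (exp_neg_integrableOn_Ioi 0 hb).const_mul _
  have hf : IntegrableOn (fun t : ℝ =>
      ((1 / 2) * ‖α t‖ ^ 2 + (c / 2) * (infDist (y t) O) ^ 2) * Real.exp (-lam * t))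
      (Ioi 0) := by
    apply Integrable.mono hg (hfc.aestronglyMeasurable.restrict)
    filter_upwards with t
    rw [Real.norm_eq_abs, Real.norm_eq_abs, abs_of_nonneg (hfnn t)]
    exact (key t).trans (le_abs_self _)
  -- the integral bound
  have hint : (∫ t in Ioi (0 : ℝ),
      ((1 / 2) * ‖α t‖ ^ 2 + (c / 2) * (infDist (y t) O) ^ 2) * Real.exp (-lam * t))
      ≤ (p / 2) * d ^ 2 := by
    calc (∫ t in Ioi (0 : ℝ),
        ((1 / 2) * ‖α t‖ ^ 2 + (c / 2) * (infDist (y t) O) ^ 2) * Real.exp (-lam * t))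
        ≤ ∫ t in Ioi (0 : ℝ), ((p ^ 2 + c) / 2 * d ^ 2) * Real.exp (-(lam + 2 * p) * t) :=
          setIntegral_mono_on hf hg measurableSet_Ioi (fun t _ => key t)
      _ = ((p ^ 2 + c) / 2 * d ^ 2) * (1 / (lam + 2 * p)) := by
          rw [integral_const_mul, my_int_exp hb]
      _ = (p / 2) * d ^ 2 := by
          field_simp
          linear_combination (-1) * d ^ 2 * hpeq
  refine ⟨hint, ?_⟩
  -- value function bound
  have hadm : Admissible x α y := by
    refine ⟨hαc.measurable, ?_, ?_⟩
    · rw [hy]; simp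
    · intro t _
      have h1 : HasDerivAt (fun t : ℝ => -p * t) (-p) t := by
        simpa using (hasDerivAt_id t).const_mul (-p)
      have h2 : HasDerivAt (fun t : ℝ => Real.exp (-p * t)) (Real.exp (-p * t) * (-p)) t :=
        (Real.hasDerivAt_exp _).comp t h1
      have h3 := (h2.smul_const (x - z)).const_add z
      have hyfun : y = fun t => z + Real.exp (-p * t) • (x - z) := funext hy
      rw [hyfun, hα]
      convert h3 using 2
      · rfl
      · rfl
      · rfl
      · ring
  have hmem : (∫ t in Ioi (0 : ℝ),
      ((1 / 2) * ‖α t‖ ^ 2 + (c / 2) * (infDist (y t) O) ^ 2) * Real.exp (-lam * t))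
      ∈ {r | ∃ α y, Admissible x α y ∧
        r = ∫ s in Ioi (0 : ℝ),
          ((1 / 2) * ‖α s‖ ^ 2 + (c / 2) * (infDist (y s) O) ^ 2) * Real.exp (-lam * s)} :=
    ⟨α, y, hadm, rfl⟩
  have hbdd : BddBelow {r | ∃ α y, Admissible x α y ∧
      r = ∫ s in Ioi (0 : ℝ),
        ((1 / 2) * ‖α s‖ ^ 2 + (c / 2) * (infDist (y s) O) ^ 2) * Real.exp (-lam * s)} := by
    refine ⟨0, ?_⟩
    rintro r ⟨a, b', _, rfl⟩
    apply setIntegral_nonneg measurableSet_Ioi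
    intro t _
    have := infDist_nonneg (x := b' t) (s := O)
    positivity
  exact (csInf_le hbdd hmem).trans hint
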